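/- For real s with Re(s) ≥ 0 and real u > 0, |(3+u)^{−s−2} − (3+3u)^{−s−2}| ≤ |s+2| · ( (3+u)^{−2} − (3+3u)^{−2} ). -/

import Mathlib

open intervalIntegral Complex

theorem cpow_diff_bound (s : ℂ) (hs : 0 ≤ s.re) (u : ℝ) (hu : 0 < u) :
    ‖((3 + u : ℝ) : ℂ) ^ (-s - 2) - ((3 + 3 * u : ℝ) : ℂ) ^ (-s - 2)‖ ≤
      ‖s + 2‖ * ((3 + u) ^ (-2 : ℤ) - (3 + 3 * u) ^ (-2 : ℤ)) := by
  set a : ℝ := 3 + u with ha'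
  set b : ℝ := 3 + 3 * u with hb'
  clear_value a b
  have hab : a ≤ b := by simp [ha', hb']; linarith
  have ha3 : (3 : ℝ) ≤ a := by simp [ha']; linarith
  have hpos : ∀ x ∈ Set.uIcc a b, (0 : ℝ) < x := by
    intro x hx
    rw [Set.uIcc_of_le hab] at hx
    linarith [hx.1]
  set c : ℂ := -s - 2 with hc
  have hderiv : ∀ x ∈ Set.uIcc a b,
      HasDerivAt (fun y : ℝ => ((y : ℂ)) ^ c) (c * (x : ℂ) ^ (c - 1)) x := by
    intro x hx
    exact (Complex.hasStrictDerivAt_cpow_const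
      (Complex.ofReal_mem_slitPlane.2 (hpos x hx))).hasDerivAt.comp_ofReal
  have hcont : ContinuousOn (fun x : ℝ => c * (x : ℂ) ^ (c - 1)) (Set.uIcc a b) := by
    apply ContinuousOn.mul continuousOn_const
    intro x hx
    exact (Complex.continuousAt_ofReal_cpow_const x _ (Or.inr (hpos x hx).ne')).continuousWithinAt
  have heq := intervalIntegral.integral_eq_sub_of_hasDerivAt hderiv
    (hcont.intervalIntegrable)
  have h1 : ((a : ℝ) : ℂ) ^ c - ((b : ℝ) : ℂ) ^ c = -∫ x in a..b, c * (x : ℂ) ^ (c - 1) := by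
    rw [heq]; ring
  rw [h1, norm_neg]
  have hbound : ∀ x ∈ Set.uIcc a b,
      ‖c * (x : ℂ) ^ (c - 1)‖ ≤ ‖s + 2‖ * x ^ (-3 : ℤ) := by
    intro x hx
    have hx0 := hpos x hx
    have hx1 : (1 : ℝ) ≤ x := by
      rw [Set.uIcc_of_le hab] at hx; linarith [hx.1]
    rw [norm_mul]
    have hnc : ‖c‖ = ‖s + 2‖ := by rw [hc, show -s - 2 = -(s + 2) by ring, norm_neg]
    rw [hnc]
    apply mul_le_mul_of_nonneg_left _ (norm_nonneg _)
    rw [Complex.norm_cpow_eq_rpow_re_of_pos hx0]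
    have hre : (c - 1).re = -s.re - 3 := by simp [hc]; ring
    rw [hre]
    calc x ^ (-s.re - 3) ≤ x ^ (-3 : ℝ) :=
          Real.rpow_le_rpow_of_exponent_le hx1 (by linarith)
      _ = x ^ (-3 : ℤ) := by rw [← Real.rpow_intCast]; norm_num
  refine le_trans (intervalIntegral.norm_integral_le_abs_of_norm_le
    (g := fun x => ‖s + 2‖ * x ^ (-3 : ℤ)) ?_ ?_) ?_
  · filter_upwards [MeasureTheory.ae_restrict_mem measurableSet_Ioc] with x hx
    apply hbound
    rw [Set.uIcc_of_le hab]
    rw [Set.uIoc_of_le hab] at hx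
    exact ⟨hx.1.le, hx.2⟩
  · exact (continuousOn_const.mul ((continuousOn_id.zpow₀ _ (fun x hx => Or.inl (hpos x hx).ne')))).intervalIntegrable
  · rw [integral_const_mul, integral_zpow
      (Or.inr ⟨by norm_num, fun h => absurd (hpos 0 h) (by norm_num)⟩),
      abs_mul, abs_norm]
    have hb0 : (0 : ℝ) < b := by simp [hb']; linarith
    have ha0 : (0 : ℝ) < a := by linarith
    have hle : b ^ (-2 : ℤ) ≤ a ^ (-2 : ℤ) := by
      rw [zpow_neg, zpow_neg]
      have h12 : a ^ (2:ℤ) ≤ b ^ (2:ℤ) := by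
        rw [show (2:ℤ) = ((2:ℕ):ℤ) from rfl, zpow_natCast, zpow_natCast]
        exact pow_le_pow_left₀ ha0.le hab 2
      exact inv_anti₀ (by positivity) h12
    have key : |(b ^ (-3 + 1 : ℤ) - a ^ (-3 + 1 : ℤ)) / ((-3 : ℤ) + 1 : ℝ)|
        ≤ a ^ (-2 : ℤ) - b ^ (-2 : ℤ) := by
      have e : (-3 + 1 : ℤ) = -2 := by norm_num
      rw [e, abs_le]
      push_cast
      rw [show ((-3 : ℝ) + 1) = -2 by norm_num]
      constructor <;> linarith [hle]
    exact mul_le_mul_of_nonneg_left key (norm_nonneg _)
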